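/- Let ψ⁺, ψ⁻ be positive solutions of -Δψ + Vψ = 0 on ℤ with Wronskian 1, z_n = √(ψ⁺_n ψ⁻_n). Then (1/(2z_n²))(√(1+4z_n²z_{n+1}²) + √(1+4z_n²z_{n-1}²)) = V_n + 2 for all n. In particular the diagonal G_{nn} := ψ⁺_n ψ⁻_n of the Green matrix determines V via √(1+4G_{nn}G_{n+1,n+1}) + √(1+4G_{nn}G_{n-1,n-1}) = 2(V_n+2)G_{nn}. -/

import Mathlib

theorem diagonal_determines_potential
    (V ψp ψm : ℤ → ℝ)
    (hp : ∀ n, 0 < ψp n) (hm : ∀ n, 0 < ψm n)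
    (hodep : ∀ n, ψp (n + 1) + ψp (n - 1) - 2 * ψp n = V n * ψp n)
    (hodem : ∀ n, ψm (n + 1) + ψm (n - 1) - 2 * ψm n = V n * ψm n)
    (hW : ∀ n, ψp n * ψm (n + 1) - ψp (n + 1) * ψm n = 1)
    (hge : ∀ n, 1 ≤ ψp n * ψm (n + 1) + ψm n * ψp (n + 1)
             ∧ 1 ≤ ψp n * ψm (n - 1) + ψm n * ψp (n - 1))
    (z G : ℤ → ℝ)
    (hz : ∀ n, z n = Real.sqrt (ψp n * ψm n))
    (hG : ∀ n, G n = ψp n * ψm n) :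
    (∀ n, (1 / (2 * (z n) ^ 2)) *
        (Real.sqrt (1 + 4 * (z n) ^ 2 * (z (n + 1)) ^ 2)
          + Real.sqrt (1 + 4 * (z n) ^ 2 * (z (n - 1)) ^ 2)) = V n + 2) ∧
    (∀ n, Real.sqrt (1 + 4 * G n * G (n + 1))
          + Real.sqrt (1 + 4 * G n * G (n - 1)) = 2 * (V n + 2) * G n) := by
  have hzsq : ∀ n, (z n) ^ 2 = G n := by
    intro n
    rw [hz, hG, Real.sq_sqrt (le_of_lt (mul_pos (hp n) (hm n)))]
  have key : ∀ n : ℤ, Real.sqrt (1 + 4 * G n * G (n + 1))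
          + Real.sqrt (1 + 4 * G n * G (n - 1)) = 2 * (V n + 2) * G n := by
    intro n
    have hW1 := hW n
    have hW2 := hW (n - 1)
    rw [show n - 1 + 1 = n by ring] at hW2
    have h1 : 1 + 4 * G n * G (n + 1)
        = (ψp n * ψm (n + 1) + ψm n * ψp (n + 1)) ^ 2 := by
      rw [hG, hG]; nlinarith [hW1]
    have h2 : 1 + 4 * G n * G (n - 1)
        = (ψp n * ψm (n - 1) + ψm n * ψp (n - 1)) ^ 2 := by
      rw [hG, hG]; nlinarith [hW2]
    have hA : (0:ℝ) ≤ ψp n * ψm (n + 1) + ψm n * ψp (n + 1) :=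
      le_trans zero_le_one (hge n).1
    have hB : (0:ℝ) ≤ ψp n * ψm (n - 1) + ψm n * ψp (n - 1) :=
      le_trans zero_le_one (hge n).2
    rw [h1, h2, Real.sqrt_sq hA, Real.sqrt_sq hB, hG]
    have e1 := hodep n
    have e2 := hodem n
    linear_combination ψm n * e1 + ψp n * e2
  refine ⟨?_, key⟩
  intro n
  have hGpos : 0 < G n := by rw [hG]; exact mul_pos (hp n) (hm n)
  rw [hzsq, hzsq, hzsq, key n]
  field_simp
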